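/- Fix an integer k ≥ 1, a real z ≥ 1, and reals ζ₁, ζ₂ ≥ 1. There exist constants γ₁, γ₂ ≥ 1 depending only on z, ζ₁, ζ₂ such that for every instance of the constrained-clustering setup (with S, Q, Ψ, π_Q, n_b, n_a as in the setup), if n_b < n_a, then (1/γ₁) · r^z / Cost(X,S) ≤ r^z / (Ψ + n_b · r^z) ≤ 2^z · γ₂ · τ(x), where τ(x) is the (k,z)-medoids sensitivity of x with respect to X. (Note that dist(x,S) = r, so r^z / Cost(X,S) = Cost(x,S)/Cost(X,S).) -/
import Mathlib


open scoped BigOperators Classical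

/-- `dSet x C` is the distance from the point `x` to the finite set `C`. -/
noncomputable def dSet {d : ℕ} (x : EuclideanSpace ℝ (Fin d))
    (C : Finset (EuclideanSpace ℝ (Fin d))) : ℝ :=
  sInf ((fun c => dist x c) '' (C : Set (EuclideanSpace ℝ (Fin d))))

/-- `kzCost z X C = Σ_{x ∈ X} dist(x,C)^z`. -/
noncomputable def kzCost {d : ℕ} (z : ℝ) (X C : Finset (EuclideanSpace ℝ (Fin d))) : ℝ :=
  ∑ x ∈ X, dSet x C ^ z

/-- The `(k,z)`-medoids sensitivity of `x` with respect to `X`. -/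
noncomputable def medoidSens {d : ℕ} (z : ℝ) (k : ℕ)
    (X : Finset (EuclideanSpace ℝ (Fin d))) (x : EuclideanSpace ℝ (Fin d)) : ℝ :=
  sSup {r : ℝ | ∃ C : Finset (EuclideanSpace ℝ (Fin d)),
    C ⊆ X ∧ C.Nonempty ∧ C.card ≤ k ∧ r = dSet x C ^ z / kzCost z X C}

lemma dSet_le_dist {d : ℕ} (x : EuclideanSpace ℝ (Fin d)) {C : Finset (EuclideanSpace ℝ (Fin d))}
    {c : EuclideanSpace ℝ (Fin d)} (hc : c ∈ C) : dSet x C ≤ dist x c := by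
  apply csInf_le ⟨0, by rintro r ⟨c', _, rfl⟩; exact dist_nonneg⟩
  exact ⟨c, hc, rfl⟩

lemma le_dSet {d : ℕ} {x : EuclideanSpace ℝ (Fin d)} {C : Finset (EuclideanSpace ℝ (Fin d))}
    {m : ℝ} (hC : C.Nonempty) (h : ∀ c ∈ C, m ≤ dist x c) : m ≤ dSet x C := by
  have hne : ((fun c => dist x c) '' (C : Set (EuclideanSpace ℝ (Fin d)))).Nonempty :=
    ⟨dist x hC.choose, hC.choose, hC.choose_spec, rfl⟩
  apply le_csInf hne
  rintro r ⟨c, hc, rfl⟩; exact h c hc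

lemma dSet_nonneg {d : ℕ} (x : EuclideanSpace ℝ (Fin d)) (C : Finset (EuclideanSpace ℝ (Fin d))) :
    0 ≤ dSet x C :=
  Real.sInf_nonneg (by rintro r ⟨c, _, rfl⟩; exact dist_nonneg)

lemma kzCost_nonneg {d : ℕ} (z : ℝ) (X C : Finset (EuclideanSpace ℝ (Fin d))) :
    0 ≤ kzCost z X C :=
  Finset.sum_nonneg fun y _ => Real.rpow_nonneg (dSet_nonneg y C) z

lemma single_le_kzCost {d : ℕ} (z : ℝ) {X : Finset (EuclideanSpace ℝ (Fin d))}
    (C : Finset (EuclideanSpace ℝ (Fin d))) {x : EuclideanSpace ℝ (Fin d)} (hx : x ∈ X) :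
    dSet x C ^ z ≤ kzCost z X C :=
  Finset.single_le_sum (fun y _ => Real.rpow_nonneg (dSet_nonneg y C) z) hx

lemma dSet_pos_of_notMem {d : ℕ} {x : EuclideanSpace ℝ (Fin d)}
    {C : Finset (EuclideanSpace ℝ (Fin d))} (hC : C.Nonempty) (hx : x ∉ C) : 0 < dSet x C := by
  have hfin : ((fun c => dist x c) '' (C : Set (EuclideanSpace ℝ (Fin d)))).Finite :=
    (C.finite_toSet).image _
  have hne : ((fun c => dist x c) '' (C : Set (EuclideanSpace ℝ (Fin d)))).Nonempty :=
    ⟨dist x hC.choose, hC.choose, hC.choose_spec, rfl⟩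
  obtain ⟨c, hc, hceq⟩ := hne.csInf_mem hfin
  rw [dSet, ← hceq]
  exact dist_pos.mpr fun h => hx (h ▸ hc)

lemma max_rpow_le {a b z : ℝ} (ha : 0 ≤ a) (hb : 0 ≤ b) (hz : 0 ≤ z) :
    max a b ^ z ≤ a ^ z + b ^ z := by
  rcases max_cases a b with ⟨h, _⟩ | ⟨h, _⟩ <;> rw [h]
  · exact le_add_of_nonneg_right (Real.rpow_nonneg hb z)
  · exact le_add_of_nonneg_left (Real.rpow_nonneg ha z)

set_option maxHeartbeats 1000000

/-- If `n_b < n_a`, then `r^z / (Ψ + n_b·r^z)` still lower bounds (up to a constant)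
the ratio `Cost(x,S)/Cost(X,S) = r^z/Cost(X,S)` and upper bounds, up to a
`2^z`-times-constant factor, the `(k,z)`-medoids sensitivity `τ(x)`. -/
theorem constrained_estimate_annulus
    (z ζ₁ ζ₂ : ℝ) (hz : 1 ≤ z) (hζ₁ : 1 ≤ ζ₁) (hζ₂ : 1 ≤ ζ₂) :
    ∃ γ₁ γ₂ : ℝ, 1 ≤ γ₁ ∧ 1 ≤ γ₂ ∧
      ∀ (k d : ℕ), 1 ≤ k → 1 ≤ d →
        ∀ (X S Q : Finset (EuclideanSpace ℝ (Fin d))) (x p : EuclideanSpace ℝ (Fin d))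
          (Ψ : ℝ) (π : EuclideanSpace ℝ (Fin d) → EuclideanSpace ℝ (Fin d)),
          k < X.card → x ∈ X → p ∈ X → 0 < dist x p →
          S ⊆ X → p ∈ S → S.card ≤ k → (∀ t ∈ S, dist x p ≤ dist t x) →
          (∀ T : Finset (EuclideanSpace ℝ (Fin d)), T ⊆ X → p ∈ T → T.card ≤ k →
            (∀ t ∈ T, dist x p ≤ dist t x) → kzCost z X S ≤ kzCost z X T) →
          Q ⊆ X → p ∈ Q → Q.card ≤ k →
          (∀ T : Finset (EuclideanSpace ℝ (Fin d)), T ⊆ X → p ∈ T → T.card ≤ k →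
            kzCost z X Q ≤ ζ₁ * kzCost z X T) →
          (1 / ζ₂) * kzCost z X Q ≤ Ψ → Ψ ≤ ζ₂ * kzCost z X Q →
          (∀ y ∈ X, π y ∈ Q ∧ dist y (π y) = dSet y Q) →
          (X.filter (fun y => dist (π y) x ≤ dist x p / 2)).card <
            (X.filter (fun y => dist x p / 2 < dist (π y) x ∧ dist (π y) x < dist x p)).card →
          (1 / γ₁) * (dist x p ^ z / kzCost z X S) ≤
              dist x p ^ z / (Ψ + ((X.filter (fun y => dist (π y) x ≤ dist x p / 2)).card : ℝ)
                * dist x p ^ z) ∧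
            dist x p ^ z / (Ψ + ((X.filter (fun y => dist (π y) x ≤ dist x p / 2)).card : ℝ)
                * dist x p ^ z) ≤ 2 ^ z * γ₂ * medoidSens z k X x := by
  have hz0 : (0:ℝ) ≤ z := le_trans zero_le_one hz
  have h4z : (1:ℝ) ≤ (4:ℝ) ^ z := by
    calc (1:ℝ) = 1 ^ z := (Real.one_rpow z).symm
    _ ≤ 4 ^ z := Real.rpow_le_rpow zero_le_one (by norm_num) hz0
  have h3z : (1:ℝ) ≤ (3:ℝ) ^ z := by
    calc (1:ℝ) = 1 ^ z := (Real.one_rpow z).symm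
    _ ≤ 3 ^ z := Real.rpow_le_rpow zero_le_one (by norm_num) hz0
  have hζ₂0 : (0:ℝ) < ζ₂ := lt_of_lt_of_le one_pos hζ₂
  have hζ₁0 : (0:ℝ) < ζ₁ := lt_of_lt_of_le one_pos hζ₁
  refine ⟨ζ₁ * ζ₂ + (4:ℝ) ^ z * (ζ₁ + 1), (3:ℝ) ^ z * ζ₂, ?_, ?_, ?_⟩
  · nlinarith
  · nlinarith
  intro k d hk hd X S Q x p Ψ π hkX hxX hpX hr hSX hpS hScard hSfar hSopt hQX hpQ hQcard
    hQapx hΨ1 hΨ2 hπ _hnb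
  set r := dist x p with hrdef
  set B := X.filter (fun y => dist (π y) x ≤ r / 2) with hBdef
  set nb := (B.card : ℝ) with hnbdef
  have hγ₁pos : (0:ℝ) < ζ₁ * ζ₂ + (4:ℝ) ^ z * (ζ₁ + 1) := by nlinarith
  have hnb0 : (0:ℝ) ≤ nb := Nat.cast_nonneg _
  have hrz : 0 < r ^ z := Real.rpow_pos_of_pos hr z
  have hSne : S.Nonempty := ⟨p, hpS⟩
  have hxS : r ≤ dSet x S := le_dSet hSne (fun t ht => by rw [dist_comm]; exact hSfar t ht)
  have hCostS : r ^ z ≤ kzCost z X S :=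
    le_trans (Real.rpow_le_rpow hr.le hxS hz0) (single_le_kzCost z S hxX)
  have hCostS_pos : 0 < kzCost z X S := lt_of_lt_of_le hrz hCostS
  have hQS : kzCost z X Q ≤ ζ₁ * kzCost z X S := hQapx S hSX hpS hScard
  have hCostQ_pos : 0 < kzCost z X Q := by
    obtain ⟨y, hyX, hyQ⟩ : ∃ y ∈ X, y ∉ Q := by
      by_contra h; push_neg at h
      have hsub : X ⊆ Q := fun y hy => h y hy
      have := Finset.card_le_card hsub
      omega
    have hy := dSet_pos_of_notMem ⟨p, hpQ⟩ hyQ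
    exact lt_of_lt_of_le (Real.rpow_pos_of_pos hy z) (single_le_kzCost z Q hyX)
  have hΨpos : 0 < Ψ :=
    lt_of_lt_of_le (mul_pos (by positivity) hCostQ_pos) hΨ1
  have hden_pos : 0 < Ψ + nb * r ^ z :=
    add_pos_of_pos_of_nonneg hΨpos (mul_nonneg hnb0 hrz.le)
  constructor
  · -- left inequality
    have hΨS : Ψ ≤ ζ₂ * ζ₁ * kzCost z X S := by
      calc Ψ ≤ ζ₂ * kzCost z X Q := hΨ2
      _ ≤ ζ₂ * (ζ₁ * kzCost z X S) := mul_le_mul_of_nonneg_left hQS hζ₂0.le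
      _ = ζ₂ * ζ₁ * kzCost z X S := by ring
    have hkey : nb * (r/4) ^ z ≤ kzCost z X Q + kzCost z X S := by
      have hpt : ∀ y ∈ B, (r/4) ^ z ≤ dSet y Q ^ z + dSet y S ^ z := by
        intro y hyB
        rw [hBdef, Finset.mem_filter] at hyB
        obtain ⟨hyX, hyb⟩ := hyB
        obtain ⟨hπQ, hπd⟩ := hπ y hyX
        rcases le_or_gt (r/4) (dist y (π y)) with hcase | hcase
        · have h1 : (r/4) ^ z ≤ dSet y Q ^ z :=
            Real.rpow_le_rpow (by positivity) (hπd ▸ hcase) hz0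
          have h0 : 0 ≤ dSet y S ^ z := Real.rpow_nonneg (dSet_nonneg _ _) z
          linarith
        · have hxy : dist x y ≤ 3/4 * r := by
            have ht := dist_triangle x (π y) y
            have e1 : dist x (π y) = dist (π y) x := dist_comm _ _
            have e2 : dist (π y) y = dist y (π y) := dist_comm _ _
            linarith
          have hyS : r/4 ≤ dSet y S := by
            apply le_dSet hSne
            intro s hs
            have h1 : r ≤ dist s x := hSfar s hs
            have h2 : dist s x ≤ dist s y + dist y x := dist_triangle s y x
            have e1 : dist y x = dist x y := dist_comm _ _
            have e2 : dist y s = dist s y := dist_comm _ _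
            linarith
          have h1 : (r/4) ^ z ≤ dSet y S ^ z :=
            Real.rpow_le_rpow (by positivity) hyS hz0
          have h0 : 0 ≤ dSet y Q ^ z := Real.rpow_nonneg (dSet_nonneg _ _) z
          linarith
      calc nb * (r/4) ^ z = ∑ _y ∈ B, (r/4) ^ z := by
            rw [Finset.sum_const, nsmul_eq_mul, hnbdef]
      _ ≤ ∑ y ∈ B, (dSet y Q ^ z + dSet y S ^ z) := Finset.sum_le_sum hpt
      _ ≤ ∑ y ∈ X, (dSet y Q ^ z + dSet y S ^ z) := by
            apply Finset.sum_le_sum_of_subset_of_nonneg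
            · rw [hBdef]; exact Finset.filter_subset _ _
            · intro y _ _
              exact add_nonneg (Real.rpow_nonneg (dSet_nonneg _ _) z)
                (Real.rpow_nonneg (dSet_nonneg _ _) z)
      _ = kzCost z X Q + kzCost z X S := by
            rw [kzCost, kzCost, ← Finset.sum_add_distrib]
    have hnbS : nb * r ^ z ≤ 4 ^ z * (ζ₁ + 1) * kzCost z X S := by
      have h4 : r ^ z = 4 ^ z * (r/4) ^ z := by
        rw [← Real.mul_rpow (by norm_num) (by positivity)]
        congr 1; ring
      have hQSsum : kzCost z X Q + kzCost z X S ≤ (ζ₁ + 1) * kzCost z X S := by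
        have : (ζ₁ + 1) * kzCost z X S = ζ₁ * kzCost z X S + kzCost z X S := by ring
        linarith
      calc nb * r ^ z = 4 ^ z * (nb * (r/4) ^ z) := by rw [h4]; ring
      _ ≤ 4 ^ z * ((ζ₁ + 1) * kzCost z X S) := by
            apply mul_le_mul_of_nonneg_left (le_trans hkey hQSsum) (by positivity)
      _ = 4 ^ z * (ζ₁ + 1) * kzCost z X S := by ring
    have hsum : Ψ + nb * r ^ z ≤ (ζ₁ * ζ₂ + 4 ^ z * (ζ₁ + 1)) * kzCost z X S := by
      have hx1 : (ζ₁ * ζ₂ + 4 ^ z * (ζ₁ + 1)) * kzCost z X S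
          = ζ₂ * ζ₁ * kzCost z X S + 4 ^ z * (ζ₁ + 1) * kzCost z X S := by ring
      linarith
    rw [div_mul_div_comm, one_mul]
    rw [div_le_div_iff₀ (mul_pos hγ₁pos hCostS_pos) hden_pos]
    exact mul_le_mul_of_nonneg_left hsum hrz.le
  · -- right inequality
    set C := insert p (Q.filter (fun c => r/2 < dist c x)) with hCdef
    have hCQ : C ⊆ Q := by
      rw [hCdef]; exact Finset.insert_subset hpQ (Finset.filter_subset _ _)
    have hCX : C ⊆ X := hCQ.trans hQX
    have hCcard : C.card ≤ k := le_trans (Finset.card_le_card hCQ) hQcard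
    have hCne : C.Nonempty := ⟨p, Finset.mem_insert_self _ _⟩
    have hxC : r/2 ≤ dSet x C := by
      apply le_dSet hCne
      intro c hc
      rw [hCdef, Finset.mem_insert] at hc
      rcases hc with rfl | hc
      · rw [← hrdef]; linarith
      · rw [Finset.mem_filter] at hc
        rw [dist_comm]; exact hc.2.le
    have h3pos : (0:ℝ) < (3:ℝ) ^ z := Real.rpow_pos_of_pos (by norm_num) z
    have hCcost : kzCost z X C ≤ 3 ^ z * (kzCost z X Q + nb * r ^ z) := by
      have hpt : ∀ y ∈ X, dSet y C ^ z ≤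
          3 ^ z * dSet y Q ^ z + (if dist (π y) x ≤ r/2 then 3 ^ z * r ^ z else 0) := by
        intro y hyX
        obtain ⟨hπQ, hπd⟩ := hπ y hyX
        by_cases hc : dist (π y) x ≤ r/2
        · rw [if_pos hc]
          have hdyC : dSet y C ≤ dSet y Q + 3/2 * r := by
            have h1 : dSet y C ≤ dist y p := dSet_le_dist y (Finset.mem_insert_self p _)
            have h2 : dist y p ≤ dist y (π y) + dist (π y) x + dist x p :=
              dist_triangle4 y (π y) x p
            rw [hπd, ← hrdef] at h2
            linarith
          have hmax : dSet y Q + 3/2 * r ≤ 3 * max (dSet y Q) r := by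
            rcases max_cases (dSet y Q) r with ⟨h, h'⟩ | ⟨h, h'⟩ <;> rw [h] <;>
              [linarith; linarith [dSet_nonneg y Q]]
          have hstep : dSet y C ^ z ≤ (3 * max (dSet y Q) r) ^ z :=
            Real.rpow_le_rpow (dSet_nonneg y C) (le_trans hdyC hmax) hz0
          have hmul : (3 * max (dSet y Q) r) ^ z = 3 ^ z * max (dSet y Q) r ^ z :=
            Real.mul_rpow (by norm_num) (le_max_of_le_right hr.le)
          have hmr : max (dSet y Q) r ^ z ≤ dSet y Q ^ z + r ^ z :=
            max_rpow_le (dSet_nonneg y Q) hr.le hz0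
          calc dSet y C ^ z ≤ 3 ^ z * max (dSet y Q) r ^ z := by rw [← hmul]; exact hstep
          _ ≤ 3 ^ z * (dSet y Q ^ z + r ^ z) :=
              mul_le_mul_of_nonneg_left hmr h3pos.le
          _ = 3 ^ z * dSet y Q ^ z + 3 ^ z * r ^ z := by ring
        · rw [if_neg hc]
          push_neg at hc
          have hπC : π y ∈ C := by
            rw [hCdef]
            exact Finset.mem_insert_of_mem (Finset.mem_filter.mpr ⟨hπQ, hc⟩)
          have h1 : dSet y C ≤ dSet y Q := by
            rw [← hπd]; exact dSet_le_dist y hπC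
          have h2 : dSet y C ^ z ≤ dSet y Q ^ z :=
            Real.rpow_le_rpow (dSet_nonneg y C) h1 hz0
          nlinarith [Real.rpow_nonneg (dSet_nonneg y Q) z]
      calc kzCost z X C ≤ ∑ y ∈ X,
            (3 ^ z * dSet y Q ^ z + if dist (π y) x ≤ r/2 then 3 ^ z * r ^ z else 0) :=
            Finset.sum_le_sum hpt
      _ = 3 ^ z * kzCost z X Q + nb * (3 ^ z * r ^ z) := by
          rw [Finset.sum_add_distrib]
          congr 1
          · rw [kzCost, Finset.mul_sum]
          · rw [← Finset.sum_filter, Finset.sum_const, nsmul_eq_mul, hnbdef, hBdef]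
      _ = 3 ^ z * (kzCost z X Q + nb * r ^ z) := by ring
    have hQΨ : kzCost z X Q ≤ ζ₂ * Ψ := by
      have h := mul_le_mul_of_nonneg_left hΨ1 hζ₂0.le
      rw [← mul_assoc, mul_one_div, div_self hζ₂0.ne', one_mul] at h
      exact h
    have hCcost2 : kzCost z X C ≤ 3 ^ z * ζ₂ * (Ψ + nb * r ^ z) := by
      have hinner : kzCost z X Q + nb * r ^ z ≤ ζ₂ * (Ψ + nb * r ^ z) := by
        have h1 : nb * r ^ z ≤ ζ₂ * (nb * r ^ z) := by
          nlinarith [mul_nonneg hnb0 hrz.le]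
        have h2 : ζ₂ * (Ψ + nb * r ^ z) = ζ₂ * Ψ + ζ₂ * (nb * r ^ z) := by ring
        linarith
      calc kzCost z X C ≤ 3 ^ z * (kzCost z X Q + nb * r ^ z) := hCcost
      _ ≤ 3 ^ z * (ζ₂ * (Ψ + nb * r ^ z)) := mul_le_mul_of_nonneg_left hinner h3pos.le
      _ = 3 ^ z * ζ₂ * (Ψ + nb * r ^ z) := by ring
    have hCcost_pos : 0 < kzCost z X C :=
      lt_of_lt_of_le (Real.rpow_pos_of_pos (by positivity) z)
        (le_trans (Real.rpow_le_rpow (by positivity) hxC hz0) (single_le_kzCost z C hxX))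
    have hτ : dSet x C ^ z / kzCost z X C ≤ medoidSens z k X x := by
      unfold medoidSens
      apply le_csSup
      · refine ⟨1, ?_⟩
        rintro t ⟨C', hC'X, _, _, rfl⟩
        exact div_le_one_of_le₀ (single_le_kzCost z C' hxX) (kzCost_nonneg z X C')
      · exact ⟨C, hCX, hCne, hCcard, rfl⟩
    have hc0 : (0:ℝ) < 3 ^ z * ζ₂ := mul_pos h3pos hζ₂0
    have h2pos : (0:ℝ) < (2:ℝ) ^ z := Real.rpow_pos_of_pos (by norm_num) z
    have h2r : (2:ℝ) ^ z * (r/2) ^ z = r ^ z := by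
      rw [← Real.mul_rpow (by norm_num) (by positivity)]
      congr 1; ring
    calc r ^ z / (Ψ + nb * r ^ z)
        = 2 ^ z * (3 ^ z * ζ₂) * ((r/2) ^ z / (3 ^ z * ζ₂ * (Ψ + nb * r ^ z))) := by
          rw [← mul_div_assoc, div_eq_div_iff hden_pos.ne' (mul_pos hc0 hden_pos).ne']
          linear_combination (-(3 ^ z * ζ₂ * (Ψ + nb * r ^ z))) * h2r
    _ ≤ 2 ^ z * (3 ^ z * ζ₂) * (dSet x C ^ z / kzCost z X C) := by
          have hd : (r/2) ^ z / (3 ^ z * ζ₂ * (Ψ + nb * r ^ z)) ≤ dSet x C ^ z / kzCost z X C :=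
            div_le_div₀ (Real.rpow_nonneg (dSet_nonneg x C) z)
              (Real.rpow_le_rpow (by positivity) hxC hz0) hCcost_pos hCcost2
          exact mul_le_mul_of_nonneg_left hd (mul_pos h2pos hc0).le
    _ ≤ 2 ^ z * (3 ^ z * ζ₂) * medoidSens z k X x :=
          mul_le_mul_of_nonneg_left hτ (mul_pos h2pos hc0).le
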